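/- The function g has no polynomial modulus of continuity with respect to the precision argument: for every polynomial p with natural-number coefficients there exist n ∈ ℕ and x, y ∈ [0, 1] such that |x − y| ≤ 2^{-p(n)} and |g(x) − g(y)| > 2^{-n}. -/

import Mathlib

/-- A real number is a dyadic rational if it has the form `m / 2^n`. -/
def IsDyadic (x : ℝ) : Prop := ∃ (m : ℤ) (n : ℕ), x = (m : ℝ) / 2 ^ n

/-- Affine interpolation on `[a,b]` with values `fa` at `a` and `fb` at `b`. -/
noncomputable def interp (a b fa fb x : ℝ) : ℝ := fa + (x - a) * (fb - fa) / (b - a)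

/-- The breakpoints `d_i = 1 - 2^{-i}`. -/
noncomputable def dbk (i : ℕ) : ℝ := 1 - (2 : ℝ) ^ (-(i : ℤ))

open Classical in
/-- `alpha i = max { j ≤ i : j = 2^(2^m) for some m }` (meaningful for `i ≥ 2`). -/
noncomputable def alpha (i : ℕ) : ℕ := Nat.findGreatest (fun j => ∃ m : ℕ, j = 2 ^ 2 ^ m) i

/-- The specification of the function `g` of the paper: `g = 1` on `[0, 1/2]`,
`g(d_i) = 1/log₂(α(i))` for `i ≥ 2`, `g` is affine on each `[d_i, d_{i+1}]` for `i ≥ 1`,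
and `g = 0` on `[1, ∞)`. -/
noncomputable def SpecG (g : ℝ → ℝ) : Prop :=
  (∀ x ∈ Set.Icc (0 : ℝ) (1 / 2), g x = 1) ∧
  (∀ i : ℕ, 2 ≤ i → g (dbk i) = 1 / Real.logb 2 (alpha i)) ∧
  (∀ i : ℕ, 1 ≤ i → ∀ x ∈ Set.Icc (dbk i) (dbk (i + 1)),
    g x = interp (dbk i) (dbk (i + 1)) (g (dbk i)) (g (dbk (i + 1))) x) ∧
  (∀ x ∈ Set.Ici (1 : ℝ), g x = 0)

lemma alpha_pow (m : ℕ) : alpha (2 ^ 2 ^ m) = 2 ^ 2 ^ m := by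
  classical
  apply le_antisymm (Nat.findGreatest_le _)
  exact Nat.le_findGreatest le_rfl ⟨m, rfl⟩

lemma eval_le_aux (p : Polynomial ℕ) (n : ℕ) (hn : 1 ≤ n) :
    p.eval n ≤ p.eval 1 * n ^ p.natDegree := by
  rw [Polynomial.eval_eq_sum_range, Polynomial.eval_eq_sum_range, Finset.sum_mul]
  apply Finset.sum_le_sum
  intro i hi
  simp only [Finset.mem_range, Nat.lt_succ_iff] at hi
  calc p.coeff i * n ^ i ≤ p.coeff i * n ^ p.natDegree :=
        Nat.mul_le_mul_left _ (Nat.pow_le_pow_right hn hi)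
    _ = p.coeff i * 1 ^ i * n ^ p.natDegree := by ring
    _ ≤ _ := le_rfl

lemma poly_dom (p : Polynomial ℕ) : ∃ m : ℕ, p.eval (m + 1) ≤ 2 ^ 2 ^ m := by
  set a := p.eval 1 with ha
  set b := p.natDegree with hb
  set c := a + b with hc
  refine ⟨3 * c, ?_⟩
  have h1 : p.eval (3 * c + 1) ≤ a * (3 * c + 1) ^ b := eval_le_aux p _ (by omega)
  have h2 : a * (3 * c + 1) ^ b ≤ 2 ^ a * (2 ^ (3 * c)) ^ b := by
    apply Nat.mul_le_mul (Nat.lt_two_pow_self (n := a)).le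
    apply Nat.pow_le_pow_left
    have := Nat.lt_two_pow_self (n := 3 * c)
    omega
  have h3 : 2 ^ a * (2 ^ (3 * c)) ^ b = 2 ^ (a + 3 * c * b) := by
    rw [← pow_mul, ← pow_add]
  have h4 : a + 3 * c * b ≤ 2 ^ (3 * c) := by
    have hcb : b ≤ c := by omega
    have hca : a ≤ c := by omega
    have h5 : a + 3 * c * b ≤ c + 3 * c * c :=
      Nat.add_le_add hca (Nat.mul_le_mul_left _ hcb)
    have h6 : c + 1 ≤ 2 ^ c := Nat.lt_two_pow_self (n := c)
    have h7 : (c + 1) ^ 3 ≤ (2 ^ c) ^ 3 := Nat.pow_le_pow_left h6 3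
    have h8 : c + 3 * c * c ≤ (c + 1) ^ 3 := by
      have hexp : (c + 1) ^ 3 = c * c * c + 3 * (c * c) + 3 * c + 1 := by ring
      have h0 : 0 ≤ c * c * c := Nat.zero_le _
      rw [hexp]
      have heq : 3 * c * c = 3 * (c * c) := by ring
      rw [heq]
      linarith
    calc a + 3 * c * b ≤ c + 3 * c * c := h5
      _ ≤ (c + 1) ^ 3 := h8
      _ ≤ (2 ^ c) ^ 3 := h7
      _ = 2 ^ (3 * c) := by rw [← pow_mul]; ring_nf
  calc p.eval (3 * c + 1) ≤ 2 ^ (a + 3 * c * b) := by omega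
    _ ≤ 2 ^ 2 ^ (3 * c) := Nat.pow_le_pow_right (by norm_num) h4

/-- `g` has no polynomial modulus of continuity with respect to the
precision argument. -/
theorem statement8 (g : ℝ → ℝ) (hg : SpecG g) :
    ∀ p : Polynomial ℕ, ∃ n : ℕ, ∃ x ∈ Set.Icc (0 : ℝ) 1, ∃ y ∈ Set.Icc (0 : ℝ) 1,
      |x - y| ≤ (2 : ℝ) ^ (-((p.eval n : ℕ) : ℤ)) ∧ (2 : ℝ) ^ (-(n : ℤ)) < |g x - g y| := by
  intro p
  obtain ⟨m, hm⟩ := poly_dom p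
  set i : ℕ := 2 ^ 2 ^ m with hi
  have hi2 : 2 ≤ i := by
    have : 1 ≤ 2 ^ m := Nat.one_le_two_pow
    calc 2 = 2 ^ 1 := rfl
      _ ≤ 2 ^ 2 ^ m := Nat.pow_le_pow_right (by norm_num) this
  have hgd : g (dbk i) = ((2 : ℝ) ^ m)⁻¹ := by
    rw [hg.2.1 i hi2, alpha_pow m]
    have h : ((2 ^ 2 ^ m : ℕ) : ℝ) = (2 : ℝ) ^ (2 ^ m : ℕ) := by push_cast; ring
    rw [h, Real.logb_pow, Real.logb_self_eq_one (by norm_num)]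
    push_cast
    rw [mul_one, one_div]
  have hg1 : g 1 = 0 := hg.2.2.2 1 (by simp)
  have hpow_pos : (0 : ℝ) < (2 : ℝ) ^ (-(i : ℤ)) := zpow_pos (by norm_num) _
  have hpow_le : (2 : ℝ) ^ (-(i : ℤ)) ≤ 1 := by
    apply zpow_le_one_of_nonpos₀ (by norm_num)
    omega
  refine ⟨m + 1, dbk i, ⟨by unfold dbk; linarith, by unfold dbk; linarith⟩,
    1, ⟨by norm_num, le_rfl⟩, ?_, ?_⟩
  · have h : dbk i - 1 = -((2 : ℝ) ^ (-(i : ℤ))) := by simp [dbk]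
    rw [h, abs_neg, abs_of_pos hpow_pos]
    apply zpow_le_zpow_right₀ (by norm_num)
    have h' := hm
    omega
  · rw [hgd, hg1, sub_zero, abs_of_pos (by positivity)]
    have h1 : (2 : ℝ) ^ (-((m : ℤ) + 1)) < (2 : ℝ) ^ (-(m : ℤ)) := by
      apply zpow_lt_zpow_right₀ (by norm_num); omega
    have h2 : (2 : ℝ) ^ (-(m : ℤ)) = ((2 : ℝ) ^ m)⁻¹ := by
      rw [zpow_neg, zpow_natCast]
    push_cast
    rw [← h2]
    exact h1
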